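/- Let C be a Krull–Schmidt preadditive category, let Z and W be indecomposable objects, and let f ∈ C(Z,W) be nonzero. Let M be the subfunctor of P_Z = C(Z,−) generated by f. Then M ≠ Tr_S P_Z for every subset S of inde C not containing (the class of) W. -/
import Mathlib


open CategoryTheory CategoryTheory.Limits CategoryTheory.MonoidalCategory

namespace TIP

attribute [local instance] CategoryTheory.Limits.hasBinaryBiproducts_of_finite_biproducts

universe v u v₂ u₂

section DirectSummand

variable {C : Type u} [Category.{v} C]

/-- `X` is a direct summand of `Y` (i.e. `X` is a retract of `Y`). -/
def IsDirectSummand (X Y : C) : Prop := ∃ (i : X ⟶ Y) (r : Y ⟶ X), i ≫ r = 𝟙 X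

end DirectSummand

section Submod

variable {C : Type u} [Category.{v} C] [Preadditive C]

/-- A subfunctor (submodule) of the representable module `P_Z = C(Z, -)`. -/
structure Submod (Z : C) where
  carrier : ∀ X : C, AddSubgroup (Z ⟶ X)
  map_mem : ∀ {X Y : C} (f : X ⟶ Y) {φ : Z ⟶ X}, φ ∈ carrier X → φ ≫ f ∈ carrier Y

theorem Submod.ext' {Z : C} {M N : Submod Z} (h : M.carrier = N.carrier) : M = N := by
  cases M; cases N; cases h; rfl

instance {Z : C} : PartialOrder (Submod Z) where
  le M N := ∀ X : C, M.carrier X ≤ N.carrier X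
  le_refl M X := le_rfl
  le_trans M N P h h' X := (h X).trans (h' X)
  le_antisymm M N h h' := Submod.ext' (funext fun X => le_antisymm (h X) (h' X))

/-- Post-composition with a fixed morphism, as an additive map. -/
def postcompHom (Z : C) {X Y : C} (f : X ⟶ Y) : (Z ⟶ X) →+ (Z ⟶ Y) where
  toFun g := g ≫ f
  map_zero' := Limits.zero_comp
  map_add' a b := Preadditive.add_comp _ _ _ _ _ _

/-- The trace submodule `Tr_S P_Z` of the representable module `P_Z`, for a class
of objects `S`. -/
def traceSub (Z : C) (S : Set C) : Submod Z where
  carrier Y := AddSubgroup.closure {h : Z ⟶ Y | ∃ W ∈ S, ∃ (b : Z ⟶ W) (a : W ⟶ Y), h = b ≫ a}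
  map_mem := by
    intro X Y f φ hφ
    have h1 : postcompHom Z f φ ∈ (AddSubgroup.closure
        {h : Z ⟶ X | ∃ W ∈ S, ∃ (b : Z ⟶ W) (a : W ⟶ X), h = b ≫ a}).map (postcompHom Z f) :=
      AddSubgroup.mem_map_of_mem _ hφ
    rw [AddMonoidHom.map_closure] at h1
    refine AddSubgroup.closure_mono ?_ h1
    rintro x ⟨h, ⟨W, hW, b, a, rfl⟩, rfl⟩
    exact ⟨W, hW, b, a ≫ f, by simp [postcompHom]⟩

/-- The action of the endomorphism ring `C(X,X)` on `C(Z,X)` by post-composition. -/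
instance endSMul {Z X : C} : SMul (End X) (Z ⟶ X) := ⟨fun e φ => φ ≫ e⟩

theorem end_smul_def {Z X : C} (e : End X) (φ : Z ⟶ X) : e • φ = φ ≫ e := rfl

/-- `C(Z,X)` is a left module over the endomorphism ring `C(X,X)`. -/
instance endModule {Z X : C} : Module (End X) (Z ⟶ X) where
  one_smul φ := by simp [end_smul_def, End.one_def]
  mul_smul e f φ := by simp [end_smul_def, End.mul_def]
  smul_zero e := by simp [end_smul_def]
  smul_add e φ ψ := Preadditive.add_comp _ _ _ _ _ _
  add_smul e f φ := Preadditive.comp_add _ _ _ _ _ _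
  zero_smul φ := by simp [end_smul_def]

end Submod

section KS

variable {C : Type u} [Category.{v} C] [Preadditive C] [HasBinaryBiproducts C]

/-- An object of an additive category is indecomposable if it is nonzero and
any decomposition as a biproduct has a zero summand. -/
def Indecomposable (X : C) : Prop :=
  ¬ IsZero X ∧ ∀ Y Z : C, Nonempty (X ≅ Y ⊞ Z) → IsZero Y ∨ IsZero Z

end KS

section KS2

variable (C : Type u) [Category.{v} C] [Preadditive C] [HasFiniteBiproducts C]

/-- A Krull-Schmidt category: every object is a finite biproduct of indecomposable
objects, and indecomposable objects have local endomorphism rings. -/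
structure IsKrullSchmidt : Prop where
  local_end : ∀ X : C, Indecomposable X → IsLocalRing (End X)
  decomp : ∀ X : C, ∃ (n : ℕ) (f : Fin n → C),
    (∀ i, Indecomposable (f i)) ∧ Nonempty (X ≅ ⨁ f)

end KS2

section Monoidal

variable {C : Type u} [Category.{v} C] [MonoidalCategory C]

/-- A right dual `(X^∨, ev_X, co_X)` of an object `X`, with
`ev_X : X ⊗ X^∨ ⟶ 𝟙` and `co_X : 𝟙 ⟶ X^∨ ⊗ X` satisfying the zigzag identities. -/
structure RightDual (X : C) where
  dual : C
  ev : X ⊗ dual ⟶ 𝟙_ C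
  coev : 𝟙_ C ⟶ dual ⊗ X
  zigzag₁ : (ρ_ X).inv ≫ (X ◁ coev) ≫ (α_ X dual X).inv ≫ (ev ▷ X) ≫ (λ_ X).hom = 𝟙 X
  zigzag₂ : (λ_ dual).inv ≫ (coev ▷ dual) ≫ (α_ dual X dual).hom ≫ (dual ◁ ev) ≫ (ρ_ dual).hom
      = 𝟙 dual

/-- The map `ι_{XY} : C(𝟙, X^∨ ⊗ Y) → C(X, Y)`, `φ ↦ (ev_X ⊗ 1_Y) ∘ (1_X ⊗ φ)`,
defined in terms of the raw data of a dual object and an evaluation morphism. -/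
def iotaRaw {X : C} (Xd : C) (ev : X ⊗ Xd ⟶ 𝟙_ C) {Y : C} (φ : 𝟙_ C ⟶ Xd ⊗ Y) : X ⟶ Y :=
  (ρ_ X).inv ≫ (X ◁ φ) ≫ (α_ X Xd Y).inv ≫ (ev ▷ Y) ≫ (λ_ Y).hom

/-- The isomorphism `ι_{XY} : C(𝟙, X^∨ ⊗ Y) → C(X, Y)`, `φ ↦ (ev_X ⊗ 1_Y) ∘ (1_X ⊗ φ)`. -/
def iota {X : C} (D : RightDual X) {Y : C} (φ : 𝟙_ C ⟶ D.dual ⊗ Y) : X ⟶ Y :=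
  iotaRaw D.dual D.ev φ

/-- The inverse of `ι_{XY}`, given by `f ↦ (1_{X^∨} ⊗ f) ∘ co_X`. -/
def iotaInv {X : C} (D : RightDual X) {Y : C} (f : X ⟶ Y) : 𝟙_ C ⟶ D.dual ⊗ Y :=
  D.coev ≫ (D.dual ◁ f)

end Monoidal

section TId

variable (C : Type u) [Category.{v} C] [Preadditive C] [MonoidalCategory C]

/-- A left-tensor ideal in a preadditive monoidal category. -/
structure TensorIdeal where
  carrier : ∀ X Y : C, AddSubgroup (X ⟶ Y)
  comp_pre : ∀ {W X Y : C} (g : W ⟶ X) {f : X ⟶ Y}, f ∈ carrier X Y → g ≫ f ∈ carrier W Y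
  comp_post : ∀ {X Y Z : C} {f : X ⟶ Y} (h : Y ⟶ Z), f ∈ carrier X Y → f ≫ h ∈ carrier X Z
  whisker_mem : ∀ (Z : C) {X Y : C} {f : X ⟶ Y}, f ∈ carrier X Y →
    Z ◁ f ∈ carrier (Z ⊗ X) (Z ⊗ Y)

variable {C}

theorem TensorIdeal.ext' {J K : TensorIdeal C} (h : J.carrier = K.carrier) : J = K := by
  cases J; cases K; cases h; rfl

instance : PartialOrder (TensorIdeal C) where
  le J K := ∀ X Y : C, J.carrier X Y ≤ K.carrier X Y
  le_refl J X Y := le_rfl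
  le_trans J K L h h' X Y := (h X Y).trans (h' X Y)
  le_antisymm J K h h' :=
    TensorIdeal.ext' (funext fun X => funext fun Y => le_antisymm (h X Y) (h' X Y))

variable (C)

/-- The tensor ideal of all morphisms. -/
def TensorIdeal.top : TensorIdeal C where
  carrier _ _ := ⊤
  comp_pre := by intros; exact AddSubgroup.mem_top _
  comp_post := by intros; exact AddSubgroup.mem_top _
  whisker_mem := by intros; exact AddSubgroup.mem_top _

variable {C}

/-- `Ψ` maps a tensor ideal `J` to the subfunctor `J(𝟙, -)` of the principal module
`P_𝟙 = C(𝟙, -)`. -/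
def Psi (J : TensorIdeal C) : Submod (𝟙_ C) where
  carrier X := J.carrier (𝟙_ C) X
  map_mem := by intro X Y f φ hφ; exact J.comp_post f hφ

variable (C) [MonoidalPreadditive C]

/-- The zero tensor ideal. -/
def TensorIdeal.bot : TensorIdeal C where
  carrier _ _ := ⊥
  comp_pre := by
    intro W X Y g f hf
    rw [AddSubgroup.mem_bot] at *
    rw [hf, Limits.comp_zero]
  comp_post := by
    intro X Y Z f h hf
    rw [AddSubgroup.mem_bot] at *
    rw [hf, Limits.zero_comp]
  whisker_mem := by
    intro Z X Y f hf
    rw [AddSubgroup.mem_bot] at *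
    rw [hf, MonoidalPreadditive.whiskerLeft_zero]

end TId

section Thick

variable (C : Type u) [Category.{v} C] [Preadditive C] [MonoidalCategory C]
  [HasBinaryBiproducts C]

/-- A thick left-tensor Ob-ideal: an isomorphism closed class of objects, closed under
direct sums, direct summands, and tensoring on the left by arbitrary objects. -/
structure ThickIdeal where
  carrier : Set C
  iso_mem : ∀ {X Y : C}, (X ≅ Y) → X ∈ carrier → Y ∈ carrier
  biprod_mem_iff : ∀ X Y : C, ((X ⊞ Y) ∈ carrier ↔ (X ∈ carrier ∧ Y ∈ carrier))
  tensor_mem : ∀ (Y : C) {X : C}, X ∈ carrier → (Y ⊗ X) ∈ carrier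

variable {C}

theorem ThickIdeal.ext' {I I' : ThickIdeal C} (h : I.carrier = I'.carrier) : I = I' := by
  cases I; cases I'; cases h; rfl

instance : PartialOrder (ThickIdeal C) where
  le I I' := I.carrier ⊆ I'.carrier
  le_refl I := Set.Subset.refl _
  le_trans I I' I'' h h' := Set.Subset.trans h h'
  le_antisymm I I' h h' := ThickIdeal.ext' (le_antisymm h h')

/-- The decategorification map `Ob`, sending a tensor ideal `J` to the thick
left-tensor Ob-ideal of objects `X` with `1_X ∈ J(X,X)`. -/
def obIdeal (J : TensorIdeal C) : ThickIdeal C where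
  carrier := {X : C | 𝟙 X ∈ J.carrier X X}
  iso_mem := by
    intro X Y e hX
    have h := J.comp_pre e.inv (J.comp_post e.hom hX)
    simpa using h
  biprod_mem_iff := by
    intro X Y
    constructor
    · intro h
      constructor
      · have h1 := J.comp_pre (biprod.inl : X ⟶ X ⊞ Y) (J.comp_post (biprod.fst : X ⊞ Y ⟶ X) h)
        simpa using h1
      · have h1 := J.comp_pre (biprod.inr : Y ⟶ X ⊞ Y) (J.comp_post (biprod.snd : X ⊞ Y ⟶ Y) h)
        simpa using h1
    · rintro ⟨hX, hY⟩
      have h1 := J.comp_pre (biprod.fst : X ⊞ Y ⟶ X) (J.comp_post (biprod.inl : X ⟶ X ⊞ Y) hX)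
      have h2 := J.comp_pre (biprod.snd : X ⊞ Y ⟶ Y) (J.comp_post (biprod.inr : Y ⟶ X ⊞ Y) hY)
      simp only [Category.id_comp] at h1 h2
      have h3 := AddSubgroup.add_mem _ h1 h2
      rw [biprod.total] at h3
      exact h3
  tensor_mem := by
    intro Y X hX
    have h := J.whisker_mem Y hX
    simpa using h

end Thick

section Braided

variable {C : Type u} [Category.{v} C] [MonoidalCategory C] [BraidedCategory C]

/-- The trace of an endomorphism, with respect to a choice of right duals. -/
def traceMor (D : ∀ X : C, RightDual X) {X : C} (f : X ⟶ X) : 𝟙_ C ⟶ 𝟙_ C :=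
  (D X).coev ≫ ((D X).dual ◁ f) ≫ (β_ (D X).dual X).hom ≫ (D X).ev

end Braided


section Statement

variable (C : Type u) [Category.{v} C] [Preadditive C] [HasFiniteBiproducts C]

/-- In a (possibly noncommutative) local ring, either `a` or `1 - a` is a unit. -/
theorem ring_isUnit_or {R : Type*} [Ring R] (hL : IsLocalRing R) (a : R) :
    IsUnit a ∨ IsUnit (1 - a) :=
  hL.isUnit_or_isUnit_of_add_one (by abel : a + (1 - a) = 1)

/-- In a (possibly noncommutative) local ring, `1 - a` is a unit whenever `a` is not. -/
theorem ring_isUnit_one_sub {R : Type*} [Ring R] (hL : IsLocalRing R) {a : R}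
    (ha : ¬ IsUnit a) : IsUnit (1 - a) :=
  (ring_isUnit_or hL a).resolve_left ha

/-- In a (possibly noncommutative) local ring, nonunits are closed under addition. -/
theorem ring_nonunits_add {R : Type*} [Ring R] (hL : IsLocalRing R) {a b : R}
    (ha : ¬ IsUnit a) (hb : ¬ IsUnit b) : ¬ IsUnit (a + b) := by
  rintro ⟨u, hu⟩
  have h1 : (↑u⁻¹ * a) + (↑u⁻¹ * b) = 1 := by rw [← mul_add, ← hu, u.inv_mul]
  rcases hL.isUnit_or_isUnit_of_add_one h1 with h2 | h2
  · have h3 := u.isUnit.mul h2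
    rw [Units.mul_inv_cancel_left] at h3
    exact ha h3
  · have h3 := u.isUnit.mul h2
    rw [Units.mul_inv_cancel_left] at h3
    exact hb h3

/-- If `W` (nonzero) is a retract of `X` and `End X` is local, then `X ≅ W`. -/
theorem iso_of_retract_of_local {D : Type u} [Category.{v} D] [Preadditive D]
    {W X : D} (hX : IsLocalRing (End X)) (hW : ¬ IsZero W)
    (i : W ⟶ X) (r : X ⟶ W) (hir : i ≫ r = 𝟙 W) : Nonempty (X ≅ W) := by
  set e : End X := r ≫ i with he
  have hee : e * e = e := by
    show e ≫ e = e
    rw [he]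
    rw [Category.assoc, ← Category.assoc i, hir, Category.id_comp]
  rcases ring_isUnit_or hX e with hu | hu
  · have h1 : e = 1 := by
      have := hu.mul_left_cancel (by rw [hee, mul_one] : e * e = e * 1)
      exact this
    have h1' : r ≫ i = 𝟙 X := h1
    exact ⟨(Iso.mk i r hir h1').symm⟩
  · exfalso
    have hee' : (1 - e) * (1 - e) = (1 - e) * 1 := by
      rw [mul_one, sub_mul, one_mul, mul_sub, mul_one, hee]
      abel
    have h0 : e = 0 := by
      have h2 : (1 : End X) - e = 1 := hu.mul_left_cancel hee'
      exact sub_eq_self.mp h2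
    have : 𝟙 W = 0 := by
      have : 𝟙 W = i ≫ e ≫ r := by
        rw [he, Category.assoc, ← Category.assoc i, hir, Category.id_comp]
      rw [h0] at this
      simpa using this
    exact hW ((IsZero.iff_id_eq_zero W).mpr this)

/-- **Lemma.** Let `C` be a Krull-Schmidt (pre)additive category, `Z, W` indecomposable,
and `0 ≠ f ∈ C(Z,W)`.  Let `M` be the subfunctor of `P_Z = C(Z,-)` generated by `f`.
Then `M ≠ Tr_S P_Z` for every subset `S` of `inde C` not containing (the class of) `W`. -/
theorem generated_ne_trace (hKS : IsKrullSchmidt C) {Z W : C}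
    (hZ : Indecomposable Z) (hW : Indecomposable W)
    (f : Z ⟶ W) (hf : f ≠ 0) (M : Submod Z)
    (hM : ∀ Y : C, (M.carrier Y : Set (Z ⟶ Y)) = {h : Z ⟶ Y | ∃ g : W ⟶ Y, h = f ≫ g})
    (S : Set C) (hS : ∀ X ∈ S, Indecomposable X) (hSW : ∀ X ∈ S, ¬ Nonempty (X ≅ W)) :
    M ≠ traceSub Z S := by
  intro heq
  have hEndW : IsLocalRing (End W) := hKS.local_end W hW
  haveI := hEndW
  have hmem : ∀ (Y : C) (h : Z ⟶ Y), h ∈ M.carrier Y ↔ ∃ g : W ⟶ Y, h = f ≫ g := by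
    intro Y h
    exact Set.ext_iff.mp (hM Y) h
  -- any morphism `W ⟶ W` factoring through a member of `S` is a nonunit
  have hTnon : ∀ X ∈ S, ∀ (c : W ⟶ X) (a : X ⟶ W), ∀ g : End W, g = c ≫ a → ¬ IsUnit g := by
    intro X hX c a g hg hu
    subst hg
    obtain ⟨u, hu'⟩ := hu
    have hcomp : c ≫ (a ≫ (↑u⁻¹ : End W)) = 𝟙 W := by
      have h1 : (u : End W) ≫ (↑u⁻¹ : End W) = 𝟙 W := by
        show (↑u⁻¹ : End W) * (u : End W) = 𝟙 W
        rw [u.inv_mul]; rfl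
      rw [← Category.assoc, ← hu', h1]
    have := iso_of_retract_of_local (hKS.local_end X (hS X hX)) hW.1
      c (a ≫ (↑u⁻¹ : End W)) hcomp
    exact hSW X hX this
  -- f lies in the trace subfunctor at W
  have hfM : f ∈ M.carrier W := (hmem W f).mpr ⟨𝟙 W, (Category.comp_id f).symm⟩
  have hfT : f ∈ (traceSub Z S).carrier W := by rw [← heq]; exact hfM
  -- induction over the closure: f = f ≫ g with g a nonunit
  obtain ⟨g, hgnon, hfg⟩ :
      ∃ g : End W, ¬ IsUnit g ∧ f = f ≫ g := by
    refine AddSubgroup.closure_induction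
      (p := fun h _ => ∃ g : End W, ¬ IsUnit g ∧ h = f ≫ g) ?_ ?_ ?_ ?_ hfT
    · rintro h ⟨X, hX, b, a, rfl⟩
      have hb : b ∈ (traceSub Z S).carrier X :=
        AddSubgroup.subset_closure ⟨X, hX, b, 𝟙 X, (Category.comp_id b).symm⟩
      rw [← heq] at hb
      obtain ⟨c, rfl⟩ := (hmem X b).mp hb
      exact ⟨c ≫ a, hTnon X hX c a _ rfl, Category.assoc f c a⟩
    · refine ⟨0, ?_, Limits.comp_zero.symm⟩
      intro hu
      have h01 : (0 : End W) = 1 := by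
        obtain ⟨u, hu'⟩ := hu
        have := u.inv_mul
        rw [hu', mul_zero] at this
        exact this
      have : 𝟙 W = 0 := h01.symm
      exact hW.1 ((IsZero.iff_id_eq_zero W).mpr this)
    · rintro x y _ _ ⟨g1, h1, rfl⟩ ⟨g2, h2, rfl⟩
      refine ⟨g1 + g2, ?_, (Preadditive.comp_add _ _ _ _ _ _).symm⟩
      exact ring_nonunits_add hEndW h1 h2
    · rintro x _ ⟨g1, h1, rfl⟩
      refine ⟨-g1, ?_, by rw [Preadditive.comp_neg]⟩
      intro hng
      have := hng.neg
      rw [neg_neg] at this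
      exact h1 this
  -- 1 - g is a unit, hence f = 0
  obtain ⟨u, hu'⟩ := ring_isUnit_one_sub hEndW hgnon
  have hzero : f ≫ ((1 : End W) - g) = 0 := by
    rw [Preadditive.comp_sub, ← hfg]
    have h1 : f ≫ (1 : End W) = f := Category.comp_id f
    rw [h1, sub_self]
  have h1 : ((1 : End W) - g) ≫ (↑u⁻¹ : End W) = 𝟙 W := by
    show (↑u⁻¹ : End W) * ((1 : End W) - g) = 𝟙 W
    rw [← hu', u.inv_mul]; rfl
  apply hf
  calc f = f ≫ 𝟙 W := (Category.comp_id f).symm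
    _ = f ≫ (((1 : End W) - g) ≫ (↑u⁻¹ : End W)) := by rw [h1]
    _ = (f ≫ ((1 : End W) - g)) ≫ (↑u⁻¹ : End W) := by rw [Category.assoc]
    _ = 0 := by rw [hzero, Limits.zero_comp]

end Statement

end TIP
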